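/- Let X_1, …, X_n be random variables (no independence assumed) such that for each i there is η_i > 0 with E[exp(η_i·X_i)] ≤ 1. Then with η = (∑_{i=1}^n 1/η_i)^{−1}, the sum S_n = ∑_{i=1}^n X_i satisfies E[exp(η·S_n)] ≤ 1 (i.e. S_n ⊴_η 0). -/
import Mathlib


open MeasureTheory

/-- Sums of ESI-negative random variables (no independence): harmonic combination of rates. -/
theorem esi_sum_dependent {Ω : Type*} [MeasurableSpace Ω]
    (P : Measure Ω) [IsProbabilityMeasure P]
    (n : ℕ) (hn : 0 < n)
    (X : Fin n → Ω → ℝ) (hXm : ∀ i, Measurable (X i))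
    (η : Fin n → ℝ) (hη : ∀ i, 0 < η i)
    (hESI : ∀ i, ∫⁻ ω, ENNReal.ofReal (Real.exp (η i * X i ω)) ∂P ≤ 1) :
    ∫⁻ ω, ENNReal.ofReal
      (Real.exp ((∑ i, (η i)⁻¹)⁻¹ * ∑ i, X i ω)) ∂P ≤ 1 := by
  have hne : Nonempty (Fin n) := ⟨⟨0, hn⟩⟩
  set s : ℝ := ∑ i, (η i)⁻¹ with hs_def
  have hs : 0 < s := Finset.sum_pos (fun i _ => inv_pos.2 (hη i)) Finset.univ_nonempty
  set w : Fin n → ℝ := fun i => s⁻¹ * (η i)⁻¹ with hw_def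
  have hw0 : ∀ i, 0 ≤ w i := fun i => mul_nonneg (inv_pos.2 hs).le (inv_pos.2 (hη i)).le
  have hw1 : ∑ i, w i = 1 := by
    rw [hw_def]
    rw [← Finset.mul_sum, ← hs_def, inv_mul_cancel₀ hs.ne']
  -- pointwise Jensen
  have hpt : ∀ ω, Real.exp (s⁻¹ * ∑ i, X i ω) ≤ ∑ i, w i * Real.exp (η i * X i ω) := by
    intro ω
    have key : s⁻¹ * ∑ i, X i ω = ∑ i, w i • (η i * X i ω) := by
      rw [Finset.mul_sum]
      refine Finset.sum_congr rfl fun i _ => ?_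
      simp only [hw_def, smul_eq_mul]
      rw [mul_assoc, inv_mul_cancel_left₀ (hη i).ne']
    rw [key]
    exact convexOn_exp.map_sum_le (fun i _ => hw0 i) hw1 (fun i _ => trivial)
  calc ∫⁻ ω, ENNReal.ofReal (Real.exp (s⁻¹ * ∑ i, X i ω)) ∂P
      ≤ ∫⁻ ω, ∑ i, ENNReal.ofReal (w i * Real.exp (η i * X i ω)) ∂P := by
        refine lintegral_mono fun ω => ?_
        calc ENNReal.ofReal (Real.exp (s⁻¹ * ∑ i, X i ω))
            ≤ ENNReal.ofReal (∑ i, w i * Real.exp (η i * X i ω)) :=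
              ENNReal.ofReal_le_ofReal (hpt ω)
          _ = ∑ i, ENNReal.ofReal (w i * Real.exp (η i * X i ω)) :=
              ENNReal.ofReal_sum_of_nonneg (fun i _ =>
                mul_nonneg (hw0 i) (Real.exp_pos _).le)
    _ = ∑ i, ∫⁻ ω, ENNReal.ofReal (w i * Real.exp (η i * X i ω)) ∂P := by
        refine lintegral_finset_sum _ fun i _ => ?_
        exact (ENNReal.measurable_ofReal.comp
          ((measurable_const.mul ((Real.measurable_exp.comp
            ((measurable_const.mul (hXm i)))))))) |>.mono le_rfl le_rfl |> fun h => h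
    _ = ∑ i, ENNReal.ofReal (w i) * ∫⁻ ω, ENNReal.ofReal (Real.exp (η i * X i ω)) ∂P := by
        refine Finset.sum_congr rfl fun i _ => ?_
        have : ∀ ω, ENNReal.ofReal (w i * Real.exp (η i * X i ω))
            = ENNReal.ofReal (w i) * ENNReal.ofReal (Real.exp (η i * X i ω)) := fun ω =>
          ENNReal.ofReal_mul (hw0 i)
        simp_rw [this]
        exact lintegral_const_mul _ (ENNReal.measurable_ofReal.comp
          (Real.measurable_exp.comp (measurable_const.mul (hXm i))))
    _ ≤ ∑ i, ENNReal.ofReal (w i) * 1 := by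
        exact Finset.sum_le_sum fun i _ => mul_le_mul_right (hESI i) _
    _ = 1 := by
        simp_rw [mul_one]
        rw [← ENNReal.ofReal_sum_of_nonneg (fun i _ => hw0 i), hw1, ENNReal.ofReal_one]
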